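/- Let n ≥ 1, let p ∈ ℂ[s] be a nonzero polynomial of degree N_p with leading coefficient p_{N_p}, and let N_q ∈ ℕ be such that p and s^{N_q} are coprime (i.e. N_q = 0 or p(0) ≠ 0). Let S ∈ Mₙ(ℂ)((x)) be invertible in Mₙ(ℂ)((x)), with pairwise commuting coefficients, satisfying S^{N_q}·(dS/dx) = p(S). Assume there exists a nonzero f ∈ ℂ((x)) of negative order such that every coefficient of S − f·1ₙ is a nilpotent matrix. Then N_p = N_q + 2, the order of f equals −1, and the leading coefficient of f equals −1/p_{N_p}. -/

import Mathlib

/-- Formal derivative of a Laurent series. -/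
noncomputable def lsDeriv {A : Type*} [Ring A] (f : LaurentSeries A) : LaurentSeries A where
  coeff k := (k + 1) • f.coeff (k + 1)
  isPWO_support' := by
    refine (f.isPWO_support.image_of_monotone
      (f := fun m : ℤ => m - 1) (fun a b h => by simpa using h)).mono ?_
    intro k hk
    have hk' : f.coeff (k + 1) ≠ 0 := by
      intro h
      simp [Function.mem_support, h] at hk
    exact ⟨k + 1, hk', by ring⟩

lemma lsDeriv_coeff {A : Type*} [Ring A] (f : LaurentSeries A) (k : ℤ) :
    (lsDeriv f).coeff k = (k+1) • f.coeff (k+1) := rfl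

noncomputable def hmapAlg {R S : Type*} [Ring R] [Ring S] [Algebra ℂ R] [Algebra ℂ S]
    (φ : R →ₐ[ℂ] S) : LaurentSeries R →ₐ[ℂ] LaurentSeries S where
  toFun x := x.map (φ : R →+* S)
  map_one' := HahnSeries.map_one (φ : R →+* S).toMonoidWithZeroHom
  map_mul' x y := HahnSeries.map_mul (φ : R →ₙ+* S)
  map_zero' := by ext k; simp [HahnSeries.map_coeff]
  map_add' x y := HahnSeries.map_add (φ : R →+ S)
  commutes' c := by
    show (HahnSeries.C (algebraMap ℂ R c)).map (φ : R →+* S) = HahnSeries.C (algebraMap ℂ S c)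
    rw [HahnSeries.map_C]; simp

lemma hmapAlg_coeff {R S : Type*} [Ring R] [Ring S] [Algebra ℂ R] [Algebra ℂ S]
    (φ : R →ₐ[ℂ] S) (x : LaurentSeries R) (k : ℤ) :
    (hmapAlg φ x).coeff k = φ (x.coeff k) := rfl

lemma hmapAlg_lsDeriv {R S : Type*} [Ring R] [Ring S] [Algebra ℂ R] [Algebra ℂ S]
    (φ : R →ₐ[ℂ] S) (x : LaurentSeries R) :
    hmapAlg φ (lsDeriv x) = lsDeriv (hmapAlg φ x) := by
  ext k
  simp [hmapAlg_coeff, lsDeriv]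

lemma hmapAlg_injective {R S : Type*} [Ring R] [Ring S] [Algebra ℂ R] [Algebra ℂ S]
    (φ : R →ₐ[ℂ] S) (hφ : Function.Injective φ) : Function.Injective (hmapAlg φ) := by
  intro x y h
  ext k
  exact hφ (congrArg (fun z => HahnSeries.coeff z k) h)

lemma exists_char (A : Type*) [Ring A] [Algebra ℂ A] [Nontrivial A]
    [FiniteDimensional ℂ A] (hA : ∀ a b : A, a * b = b * a) : Nonempty (A →ₐ[ℂ] ℂ) := by
  letI : CommRing A := { ‹Ring A› with mul_comm := hA }
  obtain ⟨m, hm⟩ := Ideal.exists_maximal A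
  haveI := hm
  letI : Field (A ⧸ m) := Ideal.Quotient.field m
  haveI : Module.Finite ℂ (A ⧸ m) := Module.Finite.quotient ℂ m
  have hsurj : Function.Surjective (algebraMap ℂ (A ⧸ m)) :=
    IsAlgClosed.algebraMap_bijective_of_isIntegral.2
  have hinj : Function.Injective (algebraMap ℂ (A ⧸ m)) := (algebraMap ℂ (A ⧸ m)).injective
  let e : ℂ ≃ₐ[ℂ] (A ⧸ m) := AlgEquiv.ofBijective (Algebra.ofId ℂ (A ⧸ m)) ⟨hinj, hsurj⟩
  exact ⟨(e.symm.toAlgHom).comp (Ideal.Quotient.mkₐ ℂ m)⟩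

lemma lsDeriv_order {f : LaurentSeries ℂ} (hf : f ≠ 0) (h0 : f.order ≠ 0) :
    (lsDeriv f) ≠ 0 ∧ (lsDeriv f).order = f.order - 1 ∧
      (lsDeriv f).coeff (f.order - 1) = f.order • f.coeff f.order := by
  have hco : (lsDeriv f).coeff (f.order - 1) = f.order • f.coeff f.order := by
    rw [lsDeriv_coeff]; norm_num
  have hne : (lsDeriv f).coeff (f.order - 1) ≠ 0 := by
    rw [hco]
    simp only [zsmul_eq_mul, mul_ne_zero_iff]
    exact ⟨by exact_mod_cast h0, (mt HahnSeries.coeff_order_eq_zero.mp hf)⟩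
  have hzero : ∀ j < f.order - 1, (lsDeriv f).coeff j = 0 := by
    intro j hj
    rw [lsDeriv_coeff, HahnSeries.coeff_eq_zero_of_lt_order (by omega), smul_zero]
  have hne0 : lsDeriv f ≠ 0 := fun h => hne (by rw [h]; rfl)
  refine ⟨hne0, le_antisymm (HahnSeries.order_le_of_coeff_ne_zero hne) ?_, hco⟩
  by_contra hlt
  push_neg at hlt
  exact (mt HahnSeries.coeff_order_eq_zero.mp hne0) (hzero _ hlt)

lemma pow_coeff_order {f : LaurentSeries ℂ} (hf : f ≠ 0) (k : ℕ) :
    (f ^ k).coeff (k • f.order) = (f.coeff f.order) ^ k := by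
  induction k with
  | zero => simp
  | succ k ih =>
    have h1 : (f ^ (k+1)).coeff ((k+1) • f.order)
        = (f ^ k * f).coeff ((f ^ k).order + f.order) := by
      rw [pow_succ, HahnSeries.order_pow]
      congr 1
      rw [succ_nsmul]
    rw [h1, HahnSeries.coeff_mul_order_add_order,
      HahnSeries.leadingCoeff_eq, HahnSeries.leadingCoeff_eq,
      HahnSeries.order_pow, ih, pow_succ]

/-- Let `p ∈ ℂ[s]` be nonzero of degree `N_p` with leading coefficient
`p_{N_p}`, with `p, s^{N_q}` coprime (`N_q = 0` or `p(0) ≠ 0`), and let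
`S ∈ Mₙ(ℂ)((x))` be invertible with pairwise commuting coefficients and
`S^{N_q}·(dS/dx) = p(S)`.  If there is a nonzero `f ∈ ℂ((x))` of negative order such
that every coefficient of `S − f·1ₙ` is nilpotent, then `N_p = N_q + 2`, the order of
`f` is `−1`, and the leading coefficient of `f` is `−1/p_{N_p}`. -/
theorem stmt_6 (n : ℕ) (hn : 0 < n) (p : Polynomial ℂ) (hp : p ≠ 0) (N_q : ℕ)
    (hco : N_q = 0 ∨ p.coeff 0 ≠ 0)
    (S : LaurentSeries (Matrix (Fin n) (Fin n) ℂ)) (hU : IsUnit S)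
    (hcomm : ∀ i j : ℤ, Commute (S.coeff i) (S.coeff j))
    (hode : S ^ N_q * lsDeriv S = Polynomial.aeval S p)
    (f : LaurentSeries ℂ) (hf : f ≠ 0) (hord : f.order < 0)
    (hnil : ∀ k : ℤ, IsNilpotent (S.coeff k - f.coeff k • (1 : Matrix (Fin n) (Fin n) ℂ))) :
    p.natDegree = N_q + 2 ∧ f.order = -1 ∧ f.coeff (-1) = -(p.leadingCoeff)⁻¹ := by
  classical
  letI : Algebra ℂ (LaurentSeries ℂ) := HahnSeries.instAlgebra
  haveI : Nonempty (Fin n) := ⟨⟨0, hn⟩⟩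
  -- the commutative subalgebra generated by the coefficients of S
  have hcomm' : ∀ a ∈ Set.range S.coeff, ∀ b ∈ Set.range S.coeff, a * b = b * a := by
    rintro a ⟨i, rfl⟩ b ⟨j, rfl⟩; exact hcomm i j
  set A : Subalgebra ℂ (Matrix (Fin n) (Fin n) ℂ) := Algebra.adjoin ℂ (Set.range S.coeff)
    with hAdef
  have hAc : ∀ a b : A, a * b = b * a := by
    letI := Algebra.adjoinCommRingOfComm ℂ hcomm'
    exact fun a b => mul_comm a b
  haveI : Nontrivial A := inferInstance
  haveI : FiniteDimensional ℂ A := inferInstance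
  obtain ⟨χ⟩ := exists_char A hAc
  -- lift S to a series with coefficients in A
  have hmem : ∀ k, S.coeff k ∈ A := fun k => Algebra.subset_adjoin ⟨k, rfl⟩
  let T : LaurentSeries A :=
    { coeff := fun k => (⟨S.coeff k, hmem k⟩ : A)
      isPWO_support' := S.isPWO_support'.mono (fun k hk => by
        simp only [Function.mem_support] at hk ⊢
        exact fun h => hk (Subtype.ext h)) }
  have hTS : hmapAlg A.val T = S := by ext k; rfl
  have hval : Function.Injective (A.val) := Subtype.val_injective
  have hodeA : T ^ N_q * lsDeriv T = Polynomial.aeval T p := by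
    apply hmapAlg_injective A.val hval
    rw [map_mul, map_pow, hmapAlg_lsDeriv, hTS,
      ← Polynomial.aeval_algHom_apply (hmapAlg A.val) T p, hTS, hode]
  -- χ kills nilpotents
  have hχnil : ∀ a : A, IsNilpotent a → χ a = 0 := by
    intro a ⟨m, hm⟩
    exact IsNilpotent.eq_zero ⟨m, by rw [← map_pow, hm, map_zero]⟩
  -- the image of T under χ is f
  have hfg : hmapAlg χ T = f := by
    ext k
    have h1 : IsNilpotent ((⟨S.coeff k, hmem k⟩ : A) - algebraMap ℂ A (f.coeff k)) := by
      obtain ⟨m, hm⟩ := hnil k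
      refine ⟨m, hval ?_⟩
      rw [map_pow, map_sub, AlgHom.commutes, map_zero]
      show (S.coeff k - algebraMap ℂ (Matrix (Fin n) (Fin n) ℂ) (f.coeff k)) ^ m = 0
      rw [Algebra.algebraMap_eq_smul_one]
      exact hm
    have h3 := hχnil _ h1
    rw [map_sub, AlgHom.commutes] at h3
    have h3' : χ (⟨S.coeff k, hmem k⟩ : A) - f.coeff k = 0 := h3
    exact sub_eq_zero.mp h3' 
  -- scalar ODE
  have hodef : f ^ N_q * lsDeriv f = Polynomial.aeval f p := by
    have h := congrArg (hmapAlg χ) hodeA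
    rwa [map_mul, map_pow, hmapAlg_lsDeriv, hfg,
      ← Polynomial.aeval_algHom_apply (hmapAlg χ) T p, hfg] at h
  -- order analysis
  have hc : f.coeff f.order ≠ 0 := (mt HahnSeries.coeff_order_eq_zero.mp hf)
  have hd0 : f.order ≠ 0 := ne_of_lt hord
  obtain ⟨hg0, hgord, hgco⟩ := lsDeriv_order hf hd0
  have hpow0 : f ^ N_q ≠ 0 := pow_ne_zero _ hf
  have hL0 : f ^ N_q * lsDeriv f ≠ 0 := mul_ne_zero hpow0 hg0
  have hLord : (f ^ N_q * lsDeriv f).order = N_q • f.order + (f.order - 1) := by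
    rw [HahnSeries.order_mul hpow0 hg0, HahnSeries.order_pow, hgord]
  have hLco : (f ^ N_q * lsDeriv f).coeff (N_q • f.order + (f.order - 1))
      = (f.coeff f.order) ^ N_q * (f.order • f.coeff f.order) := by
    have h := HahnSeries.coeff_mul_order_add_order (f ^ N_q) (lsDeriv f)
    rw [HahnSeries.leadingCoeff_eq, HahnSeries.leadingCoeff_eq, HahnSeries.order_pow, hgord,
      pow_coeff_order hf, hgco] at h
    exact h
  -- coefficients of aeval f p
  have hRco : ∀ j : ℤ, j ≤ p.natDegree • f.order →
      (Polynomial.aeval f p).coeff j =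
        if j = p.natDegree • f.order then p.leadingCoeff * (f.coeff f.order) ^ p.natDegree
        else 0 := by
    intro j hj
    rw [Polynomial.aeval_eq_sum_range]
    have hsum : (∑ i ∈ Finset.range (p.natDegree + 1), p.coeff i • f ^ i).coeff j
        = ∑ i ∈ Finset.range (p.natDegree + 1), (p.coeff i • f ^ i).coeff j :=
      map_sum (HahnSeries.coeff.addMonoidHom j) _ _
    rw [hsum]
    have hterm : ∀ i ∈ Finset.range (p.natDegree + 1), i ≠ p.natDegree →
        (p.coeff i • f ^ i).coeff j = 0 := by
      intro i hi hine
      have hilt : i < p.natDegree := by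
        simp only [Finset.mem_range] at hi; omega
      have : j < (f ^ i).order := by
        rw [HahnSeries.order_pow]
        have : (p.natDegree : ℤ) * f.order < (i : ℤ) * f.order := by
          apply mul_lt_mul_of_neg_right _ hord
          exact_mod_cast hilt
        have h2 : p.natDegree • f.order = (p.natDegree : ℤ) * f.order := nsmul_eq_mul _ _
        have h3 : i • f.order = (i : ℤ) * f.order := nsmul_eq_mul _ _
        omega
      rw [HahnSeries.coeff_smul, HahnSeries.coeff_eq_zero_of_lt_order this, smul_zero]
    rw [Finset.sum_eq_single_of_mem p.natDegree (Finset.self_mem_range_succ _) hterm]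
    rw [HahnSeries.coeff_smul]
    by_cases hje : j = p.natDegree • f.order
    · rw [if_pos hje, hje, pow_coeff_order hf, Polynomial.leadingCoeff, smul_eq_mul]
    · rw [if_neg hje]
      have : j < (f ^ p.natDegree).order := by
        rw [HahnSeries.order_pow]; omega
      rw [HahnSeries.coeff_eq_zero_of_lt_order this, smul_zero]
  -- order of RHS is N_p • d
  have hR0 : (Polynomial.aeval f p : LaurentSeries ℂ) ≠ 0 := hodef ▸ hL0
  have hRord : (Polynomial.aeval f p : LaurentSeries ℂ).order = p.natDegree • f.order := by
    refine le_antisymm (HahnSeries.order_le_of_coeff_ne_zero ?_) ?_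
    · rw [hRco _ le_rfl, if_pos rfl]
      exact mul_ne_zero (Polynomial.leadingCoeff_ne_zero.mpr hp) (pow_ne_zero _ hc)
    · by_contra hlt
      push_neg at hlt
      have := hRco _ (le_of_lt hlt)
      rw [if_neg (ne_of_lt hlt)] at this
      exact (mt HahnSeries.coeff_order_eq_zero.mp hR0) this
  -- the key order equation
  have hkey : N_q • f.order + (f.order - 1) = p.natDegree • f.order := by
    rw [← hLord, hodef, hRord]
  have hnq : (N_q : ℤ) * f.order + f.order - 1 = (p.natDegree : ℤ) * f.order := by
    have h2 : N_q • f.order = (N_q : ℤ) * f.order := nsmul_eq_mul _ _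
    have h3 : p.natDegree • f.order = (p.natDegree : ℤ) * f.order := nsmul_eq_mul _ _
    omega
  -- solve: f.order = -1 and natDegree = N_q + 2
  have hfac : f.order * ((N_q : ℤ) + 1 - p.natDegree) = 1 := by ring_nf; linarith [hnq]
  have hunit : IsUnit (f.order) := IsUnit.of_mul_eq_one _ hfac
  have hdm1 : f.order = -1 := by
    rcases Int.isUnit_iff.mp hunit with h | h
    · omega
    · exact h
  have hdeg : p.natDegree = N_q + 2 := by
    rw [hdm1] at hfac
    omega
  refine ⟨hdeg, hdm1, ?_⟩
  -- leading coefficient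
  have hcoeq : (f.coeff f.order) ^ N_q * (f.order • f.coeff f.order)
      = p.leadingCoeff * (f.coeff f.order) ^ p.natDegree := by
    rw [← hLco, hodef, hkey, hRco _ le_rfl, if_pos rfl]
  rw [hdm1, hdeg] at hcoeq
  rw [hdm1] at hc
  set c := f.coeff (-1) with hcdef
  have hlc : p.leadingCoeff ≠ 0 := Polynomial.leadingCoeff_ne_zero.mpr hp
  have hato : c ^ N_q * (-c) = p.leadingCoeff * c ^ (N_q + 2) := by
    have h := hcoeq
    rw [zsmul_eq_mul] at h
    push_cast at h
    linear_combination h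
  have hmc : p.leadingCoeff * c = -1 := by
    have h5 : c ^ N_q * c ≠ 0 := mul_ne_zero (pow_ne_zero _ hc) hc
    have h6 : (p.leadingCoeff * c) * (c ^ N_q * c) = (-1) * (c ^ N_q * c) := by
      linear_combination -hato
    exact mul_right_cancel₀ h5 h6
  have h7 : p.leadingCoeff * c = p.leadingCoeff * (-(p.leadingCoeff)⁻¹) := by
    rw [hmc, mul_neg, mul_inv_cancel₀ hlc]
  exact mul_left_cancel₀ hlc h7
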